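/- For row standard ν-tableaux v and v̂ (ν a multicomposition of n), v ⊵ v̂ if and only if d(v) ≤ d(v̂) in the Bruhat order on S_n. -/

import Mathlib

open scoped Classical

noncomputable section

namespace SpechtInduction

/-- A node `(l, r, c)`: component `l`, row `r`, column `c` (all 0-indexed). -/
abbrev Node : Type := ℕ × ℕ × ℕ

/-- A multicomposition of `n` with `ℓ` components, each a list of row lengths. -/
structure Multicomp (ℓ n : ℕ) where
  parts : List (List ℕ)
  len_eq : parts.length = ℓ
  size_eq : (parts.map List.sum).sum = n

namespace Multicomp

variable {ℓ n : ℕ}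

def rowLen (μ : Multicomp ℓ n) (l r : ℕ) : ℕ := (μ.parts.getD l []).getD r 0

def mem (μ : Multicomp ℓ n) (x : Node) : Prop := x.2.2 < μ.rowLen x.1 x.2.1

def compSize (μ : Multicomp ℓ n) (l : ℕ) : ℕ := (μ.parts.getD l []).sum

/-- The partial sums appearing in the dominance order. -/
def psum (μ : Multicomp ℓ n) (l i : ℕ) : ℕ :=
  (∑ k ∈ Finset.range l, μ.compSize k) + ∑ j ∈ Finset.range i, μ.rowLen l j

/-- The dominance order `lam ⊵ mu` on multicompositions. -/
def Dominates (lam mu : Multicomp ℓ n) : Prop := ∀ l i, mu.psum l i ≤ lam.psum l i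

/-- Each component is a (weakly decreasing) partition. -/
def IsMultipartition (μ : Multicomp ℓ n) : Prop := ∀ l r, μ.rowLen l (r+1) ≤ μ.rowLen l r

end Multicomp

/-- A `μ`-tableau, recorded by the position function sending each entry `k ∈ {1,…,n}`
to the node it occupies: a bijection onto the diagram of `μ`. -/
def IsTableau {ℓ n : ℕ} (μ : Multicomp ℓ n) (pos : ℕ → Node) : Prop :=
  (∀ j k, 1 ≤ j → j ≤ n → 1 ≤ k → k ≤ n → pos j = pos k → j = k) ∧
  (∀ k, 1 ≤ k → k ≤ n → μ.mem (pos k)) ∧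
  (∀ x, μ.mem x → ∃ k, 1 ≤ k ∧ k ≤ n ∧ pos k = x)

/-- Row standard: entries increase along the rows. -/
def RowStandard {ℓ n : ℕ} (μ : Multicomp ℓ n) (pos : ℕ → Node) : Prop :=
  IsTableau μ pos ∧ ∀ j k, 1 ≤ j → j ≤ n → 1 ≤ k → k ≤ n →
    (pos j).1 = (pos k).1 → (pos j).2.1 = (pos k).2.1 → (pos j).2.2 < (pos k).2.2 → j < k

/-- Column standard (= conjugate is row standard): entries increase down the columns. -/
def ColStandard {ℓ n : ℕ} (μ : Multicomp ℓ n) (pos : ℕ → Node) : Prop :=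
  IsTableau μ pos ∧ ∀ j k, 1 ≤ j → j ≤ n → 1 ≤ k → k ≤ n →
    (pos j).1 = (pos k).1 → (pos j).2.2 = (pos k).2.2 → (pos j).2.1 < (pos k).2.1 → j < k

/-- Standard tableau: the tableau and its conjugate are both row standard. -/
def StandardTab {ℓ n : ℕ} (μ : Multicomp ℓ n) (pos : ℕ → Node) : Prop :=
  RowStandard μ pos ∧ ColStandard μ pos

/-- Number of entries `≤ m` lying in row `(l,r)`. -/
def cnt (pos : ℕ → Node) (m l r : ℕ) : ℕ :=
  ((Finset.Icc 1 m).filter fun k => (pos k).1 = l ∧ (pos k).2.1 = r).card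

/-- Number of entries `≤ m` lying in column `c` of component `l`. -/
def ccnt (pos : ℕ → Node) (m l c : ℕ) : ℕ :=
  ((Finset.Icc 1 m).filter fun k => (pos k).1 = l ∧ (pos k).2.2 = c).card

/-- Number of entries `≤ m` lying in component `l`. -/
def compcnt (pos : ℕ → Node) (m l : ℕ) : ℕ :=
  ((Finset.Icc 1 m).filter fun k => (pos k).1 = l).card

/-- Dominance partial sums of the shape `Shape(t_m)` of the subtableau on entries `1,…,m`. -/
def tabPsum (pos : ℕ → Node) (m l i : ℕ) : ℕ :=
  (∑ k ∈ Finset.range l, compcnt pos m k) + ∑ j ∈ Finset.range i, cnt pos m l j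

/-- Dominance order `s ⊵ t` on tableaux with `n` entries:
`Shape(s_m) ⊵ Shape(t_m)` for all `1 ≤ m ≤ n`. -/
def TabDominates (n : ℕ) (s t : ℕ → Node) : Prop :=
  ∀ m l i, 1 ≤ m → m ≤ n → tabPsum t m l i ≤ tabPsum s m l i

/-- Dominance partial sums of the shape of the *conjugate* of the subtableau `pos_m`,
for a tableau with `ℓ` components (components get reversed, rows and columns swapped). -/
def conjPsum (ℓ : ℕ) (pos : ℕ → Node) (m l i : ℕ) : ℕ :=
  (∑ k ∈ Finset.range l, compcnt pos m (ℓ - 1 - k)) +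
    ∑ j ∈ Finset.range i, ccnt pos m (ℓ - 1 - l) j

/-- `t' ⊵ s'`: the conjugate of `t` dominates the conjugate of `s`. -/
def ConjTabDominates (ℓ n : ℕ) (t s : ℕ → Node) : Prop :=
  ∀ m l i, 1 ≤ m → m ≤ n → conjPsum ℓ s m l i ≤ conjPsum ℓ t m l i

/-- `u' ⊵ t`: the conjugate of `u` dominates `t`. -/
def ConjDomTab (ℓ n : ℕ) (u t : ℕ → Node) : Prop :=
  ∀ m l i, 1 ≤ m → m ≤ n → tabPsum t m l i ≤ conjPsum ℓ u m l i

/-- Lexicographic (row reading) order on nodes: by component, then row, then column. -/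
def nodeLex (x y : Node) : Prop :=
  x.1 < y.1 ∨ (x.1 = y.1 ∧ (x.2.1 < y.2.1 ∨ (x.2.1 = y.2.1 ∧ x.2.2 < y.2.2)))

/-- `pos` is the row-reading tableau `t^μ` of `μ`: entries filled in order along
the rows of each component in turn. -/
def IsRowReading {ℓ n : ℕ} (μ : Multicomp ℓ n) (pos : ℕ → Node) : Prop :=
  IsTableau μ pos ∧ ∀ j k, 1 ≤ j → j ≤ n → 1 ≤ k → k ≤ n → (j < k ↔ nodeLex (pos j) (pos k))

/-- Column reading order on nodes: components from last to first, then columns, then rows. -/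
def nodeColLex (x y : Node) : Prop :=
  y.1 < x.1 ∨ (x.1 = y.1 ∧ (x.2.2 < y.2.2 ∨ (x.2.2 = y.2.2 ∧ x.2.1 < y.2.1)))

/-- `pos` is the column-reading tableau `t_μ` of `μ`: entries filled in order down the
columns, from the last component to the first. -/
def IsColReading {ℓ n : ℕ} (μ : Multicomp ℓ n) (pos : ℕ → Node) : Prop :=
  IsTableau μ pos ∧ ∀ j k, 1 ≤ j → j ≤ n → 1 ≤ k → k ≤ n → (j < k ↔ nodeColLex (pos j) (pos k))

/-- `w` lies in the "symmetric group on `{a,…,b}`": it fixes every point outside `[a,b]`. -/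
def FixesOutside (w : Equiv.Perm ℕ) (a b : ℕ) : Prop := ∀ k, k < a ∨ b < k → w k = k

/-- Coxeter length of a permutation of `{1,…,n}`, as the number of inversions. -/
def permLength (n : ℕ) (w : Equiv.Perm ℕ) : ℕ :=
  (((Finset.Icc 1 n) ×ˢ (Finset.Icc 1 n)).filter fun p => p.1 < p.2 ∧ w p.2 < w p.1).card

/-- Right action of a permutation on a tableau (position function). -/
def actTab (pos : ℕ → Node) (w : Equiv.Perm ℕ) : ℕ → Node := fun k => pos (w k)

/-- `d` is the permutation `d(pos)` with `pos = tpos · d`, `tpos` the reference tableau. -/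
def IsDPerm (n : ℕ) (tpos pos : ℕ → Node) (d : Equiv.Perm ℕ) : Prop :=
  FixesOutside d 1 n ∧ ∀ k, 1 ≤ k → k ≤ n → pos k = tpos (d k)

/-- The simple transposition `s_i = (i, i+1)`. -/
def swapP (i : ℕ) : Equiv.Perm ℕ := Equiv.swap i (i + 1)

/-- The product `s_{i₁} ⋯ s_{i_k}` of a word in the Coxeter generators. -/
def wordProd (L : List ℕ) : Equiv.Perm ℕ := (L.map swapP).prod

/-- A reduced word for its product, using generators `s_1,…,s_{n-1}`. -/
def IsReducedWord (n : ℕ) (L : List ℕ) : Prop :=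
  (∀ i ∈ L, 1 ≤ i ∧ i < n) ∧ L.length = permLength n (wordProd L)

/-- Bruhat order on `S_n`: some reduced expression of `u` is a subexpression of some
reduced expression of `w`. -/
def BruhatLE (n : ℕ) (u w : Equiv.Perm ℕ) : Prop :=
  ∃ ww uw : List ℕ, IsReducedWord n ww ∧ wordProd ww = w ∧
    uw.Sublist ww ∧ IsReducedWord n uw ∧ wordProd uw = u

/-- Membership in the Young subgroup `S_μ`: `w` fixes `[1,n]` setwise, preserving each
row of the reference row-reading tableau `tpos = t^μ`. -/
def YoungMem (n : ℕ) (tpos : ℕ → Node) (w : Equiv.Perm ℕ) : Prop :=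
  FixesOutside w 1 n ∧ ∀ k, 1 ≤ k → k ≤ n →
    (tpos (w k)).1 = (tpos k).1 ∧ (tpos (w k)).2.1 = (tpos k).2.1

/-- `accSize μ k = |μ^(1)| + ⋯ + |μ^(k)|`. -/
def accSize {ℓ n : ℕ} (μ : Multicomp ℓ n) (k : ℕ) : ℕ := ∑ j ∈ Finset.range k, μ.compSize j

/-- The content of a node, with `ξinv` a fixed inverse of `ξ`:
`ξ^(c-r) Q_l` if `ξ ≠ 1` and `c - r + Q_l` if `ξ = 1`. -/
def contOfR {R : Type*} [CommRing R] (ξ ξinv : R) (Q : ℕ → R) (x : Node) : R :=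
  if ξ = 1 then ((x.2.2 : R) - (x.2.1 : R)) + Q (x.1 + 1)
  else ξ ^ x.2.2 * ξinv ^ x.2.1 * Q (x.1 + 1)

/-- The set of contents `cont_s(k)` as `s` ranges over all standard tableaux of
multipartitions of `n`. -/
def ContSet (ℓ n : ℕ) {R : Type*} [CommRing R] (ξ ξinv : R) (Q : ℕ → R) (k : ℕ) : Set R :=
  {c | ∃ (μ : Multicomp ℓ n) (pos : ℕ → Node), μ.IsMultipartition ∧ StandardTab μ pos ∧
        c = contOfR ξ ξinv Q (pos k)}

/-- The cyclotomic Hecke algebra of type `G(ℓ,1,n)`: an `R`-algebra `A` equipped with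
generators satisfying the defining relations, together with the elements `T_w` and the
`*` anti-involution fixing the generators. -/
structure Hecke (R : Type*) [CommRing R] (A : Type*) [Ring A] [Algebra R A]
    (n ℓ : ℕ) (ξ : R) (Q : ℕ → R) where
  L : ℕ → A
  T : ℕ → A
  Tw : Equiv.Perm ℕ → A
  star : A →ₗ[R] A
  cyclotomic : ((List.range ℓ).map fun k => L 1 - algebraMap R A (Q (k + 1))).prod = 0
  LL : ∀ r t, L r * L t = L t * L r
  quad : ∀ r, 1 ≤ r → r < n → (T r + 1) * (T r - algebraMap R A ξ) = 0
  TL : ∀ r, 1 ≤ r → r < n →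
      T r * L r + (if ξ = 1 then 1 else 0) = L (r + 1) * (T r - algebraMap R A ξ + 1)
  braid : ∀ s, 1 ≤ s → s + 1 < n → T s * T (s + 1) * T s = T (s + 1) * T s * T (s + 1)
  TLfar : ∀ r t, 1 ≤ r → r < n → t ≠ r → t ≠ r + 1 → T r * L t = L t * T r
  TTfar : ∀ r s, 1 ≤ r → r < n → 1 ≤ s → s < n → (r + 1 < s ∨ s + 1 < r) →
      T r * T s = T s * T r
  Tw_one : Tw 1 = 1
  Tw_mul : ∀ w i, 1 ≤ i → i < n → permLength n w < permLength n (w * swapP i) →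
      Tw (w * swapP i) = Tw w * T i
  star_mul : ∀ a b, star (a * b) = star b * star a
  star_one : star 1 = 1
  star_L : ∀ r, star (L r) = L r
  star_T : ∀ r, star (T r) = T r

namespace Hecke

variable {R : Type*} [CommRing R] {A : Type*} [Ring A] [Algebra R A]
  {n ℓ : ℕ} {ξ : R} {Q : ℕ → R}

/-- `x_μ = Σ_{w ∈ S_μ} T_w`, where `tpos = t^μ`. -/
def xElt (h : Hecke R A n ℓ ξ Q) (tpos : ℕ → Node) : A :=
  ∑ᶠ (w : Equiv.Perm ℕ) (_ : YoungMem n tpos w), h.Tw w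

/-- `y_μ = Σ_{w ∈ S_μ} (-ξ)^{-ℓ(w)} T_w`. -/
def yElt (h : Hecke R A n ℓ ξ Q) (ξinv : R) (tpos : ℕ → Node) : A :=
  ∑ᶠ (w : Equiv.Perm ℕ) (_ : YoungMem n tpos w), ((-ξinv) ^ permLength n w) • h.Tw w

/-- `u⁺_μ = Π_{k=2}^{ℓ} Π_{m=1}^{|μ^(1)|+⋯+|μ^(k-1)|} (L_m - Q_k)`. -/
def uPlus (h : Hecke R A n ℓ ξ Q) (μ : Multicomp ℓ n) : A :=
  ((List.range' 2 (ℓ - 1)).map fun k =>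
    ((List.range' 1 (accSize μ (k - 1))).map fun m => h.L m - algebraMap R A (Q k)).prod).prod

/-- `u⁻_μ = Π_{k=1}^{ℓ-1} Π_{m=1}^{|μ^(1)|+⋯+|μ^(ℓ-k+1)|} (L_m - Q_k)`. -/
def uMinus (h : Hecke R A n ℓ ξ Q) (μ : Multicomp ℓ n) : A :=
  ((List.range' 1 (ℓ - 1)).map fun k =>
    ((List.range' 1 (accSize μ (ℓ - k + 1))).map fun m => h.L m - algebraMap R A (Q k)).prod).prod

/-- `m_μ = u⁺_μ x_μ` (here `tpos = t^μ`). -/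
def mmu (h : Hecke R A n ℓ ξ Q) (μ : Multicomp ℓ n) (tpos : ℕ → Node) : A :=
  h.uPlus μ * h.xElt tpos

/-- `n_μ = u⁻_μ y_μ`. -/
def nmu (h : Hecke R A n ℓ ξ Q) (ξinv : R) (μ : Multicomp ℓ n) (tpos : ℕ → Node) : A :=
  h.uMinus μ * h.yElt ξinv tpos

/-- The Murphy basis element `m_{st} = T_{d(s)}^* m_μ T_{d(t)}`. -/
def mst (h : Hecke R A n ℓ ξ Q) (μ : Multicomp ℓ n) (tpos : ℕ → Node)
    (ds dt : Equiv.Perm ℕ) : A :=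
  h.star (h.Tw ds) * h.mmu μ tpos * h.Tw dt

/-- The dual Murphy basis element `n_{st} = T_{d(s)}^* n_μ T_{d(t)}`. -/
def nst (h : Hecke R A n ℓ ξ Q) (ξinv : R) (μ : Multicomp ℓ n) (tpos : ℕ → Node)
    (ds dt : Equiv.Perm ℕ) : A :=
  h.star (h.Tw ds) * h.nmu ξinv μ tpos * h.Tw dt

end Hecke

/-- The element `F_t = Π_{k=1}^n Π_{c ∈ contents, c ≠ cont_t(k)}
`(L_k - c)/(cont_t(k) - c)` of the split semisimple cyclotomic Hecke algebra. -/
def Ftab {K : Type*} [Field K] {A : Type*} [Ring A] [Algebra K A] {n ℓ : ℕ} {ξ : K}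
    {Q : ℕ → K} (h : Hecke K A n ℓ ξ Q)
    (hfin : ∀ k, (ContSet ℓ n ξ ξ⁻¹ Q k).Finite) (t : ℕ → Node) : A :=
  ((List.range n).map fun k0 =>
    Finset.noncommProd
      (((hfin (k0 + 1)).toFinset).filter fun c => c ≠ contOfR ξ ξ⁻¹ Q (t (k0 + 1)))
      (fun c => algebraMap K A ((contOfR ξ ξ⁻¹ Q (t (k0 + 1)) - c)⁻¹) *
        (h.L (k0 + 1) - algebraMap K A c))
      (by
        intro a _ b _ _
        have hc : ∀ (r : K) (z : A), Commute (algebraMap K A r) z := fun r z =>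
          Algebra.commutes r z
        have c1 : Commute (h.L (k0 + 1) - algebraMap K A a)
            (h.L (k0 + 1) - algebraMap K A b) :=
          Commute.sub_left ((Commute.refl (h.L (k0 + 1))).sub_right ((hc b _).symm))
            (hc a _)
        exact Commute.mul_left (hc _ _)
          (Commute.mul_right ((hc _ _).symm) c1)
        )).prod

/-- The seminormal basis element `f_{st} = F_s m_{st} F_t`.  Here `tpos = t^μ` and
`ds, dt` are the permutations with `s = t^μ d(s)`, `t = t^μ d(t)`. -/
def fElt {K : Type*} [Field K] {A : Type*} [Ring A] [Algebra K A] {n ℓ : ℕ} {ξ : K}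
    {Q : ℕ → K} (h : Hecke K A n ℓ ξ Q)
    (hfin : ∀ k, (ContSet ℓ n ξ ξ⁻¹ Q k).Finite) (μ : Multicomp ℓ n)
    (tpos spos tpos' : ℕ → Node) (ds dt : Equiv.Perm ℕ) : A :=
  Ftab h hfin spos * h.mst μ tpos ds dt * Ftab h hfin tpos'

/-- Semisimplicity of the cyclotomic Hecke algebra, in the equivalent combinatorial form:
contents separate standard tableaux. -/
def SeparatedContents (ℓ n : ℕ) {R : Type*} [CommRing R] (ξ ξinv : R) (Q : ℕ → R) : Prop :=
  ∀ (μ ν : Multicomp ℓ n) (s t : ℕ → Node), μ.IsMultipartition → ν.IsMultipartition →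
    StandardTab μ s → StandardTab ν t →
    (∀ k, 1 ≤ k → k ≤ n → contOfR ξ ξinv Q (s k) = contOfR ξ ξinv Q (t k)) →
    ∀ k, 1 ≤ k → k ≤ n → s k = t k

/-! ## Residues, degrees and the quiver combinatorics -/

/-- The residue of a node: `c - r + κ_l (mod e)`. -/
def resOf (e : ℕ) (κ : ℕ → ℤ) (x : Node) : ZMod e :=
  (((x.2.2 : ℤ) - (x.2.1 : ℤ) + κ x.1 : ℤ) : ZMod e)

/-- The entries of the Cartan matrix of the quiver `Γ_e`. -/
def cartanInt (e : ℕ) (i j : ZMod e) : ℤ :=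
  (if i = j then 2 else 0) + (if j = i + 1 ∧ i ≠ j then -1 else 0) +
    (if j = i - 1 ∧ i ≠ j then -1 else 0)

/-- `x` is an addable node of the shape with row lengths `f` (with `ℓ` components). -/
def AddableNode (f : ℕ → ℕ → ℕ) (ℓ : ℕ) (x : Node) : Prop :=
  x.1 < ℓ ∧ x.2.2 = f x.1 x.2.1 ∧ (x.2.1 = 0 ∨ x.2.2 < f x.1 (x.2.1 - 1))

/-- `x` is a removable node of the shape with row lengths `f`. -/
def RemovableNode (f : ℕ → ℕ → ℕ) (ℓ : ℕ) (x : Node) : Prop :=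
  x.1 < ℓ ∧ x.2.2 + 1 = f x.1 x.2.1 ∧ f x.1 (x.2.1 + 1) ≤ x.2.2

/-- `x` is strictly below `y`. -/
def Below (x y : Node) : Prop := y.1 < x.1 ∨ (x.1 = y.1 ∧ y.2.1 < x.2.1)

/-- A finite region containing all relevant nodes. -/
def nodeRegion (ℓ n : ℕ) : Finset Node :=
  (Finset.range ℓ) ×ˢ (Finset.range (n + 1)) ×ˢ (Finset.range (n + 1))

/-- `d_A(μ) = #{addable i-nodes below A} - #{removable i-nodes below A}` (same residue). -/
def dBelow (e ℓ n : ℕ) (κ : ℕ → ℤ) (f : ℕ → ℕ → ℕ) (A : Node) : ℤ :=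
  ((((nodeRegion ℓ n).filter fun x =>
      AddableNode f ℓ x ∧ resOf e κ x = resOf e κ A ∧ Below x A).card : ℤ)) -
  (((nodeRegion ℓ n).filter fun x =>
      RemovableNode f ℓ x ∧ resOf e κ x = resOf e κ A ∧ Below x A).card : ℤ)

/-- `d^A(μ)`: the same with "above" in place of "below". -/
def dAbove (e ℓ n : ℕ) (κ : ℕ → ℤ) (f : ℕ → ℕ → ℕ) (A : Node) : ℤ :=
  ((((nodeRegion ℓ n).filter fun x =>
      AddableNode f ℓ x ∧ resOf e κ x = resOf e κ A ∧ Below A x).card : ℤ)) -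
  (((nodeRegion ℓ n).filter fun x =>
      RemovableNode f ℓ x ∧ resOf e κ x = resOf e κ A ∧ Below A x).card : ℤ)

/-- The shape (row-length function) of the subtableau of `pos` on entries `1,…,m`. -/
def subShape (pos : ℕ → Node) (m : ℕ) : ℕ → ℕ → ℕ := fun l r => cnt pos m l r

/-- The Brundan–Kleshchev–Wang degree of a standard tableau. -/
def degTab (e ℓ n : ℕ) (κ : ℕ → ℤ) (pos : ℕ → Node) : ℤ :=
  ∑ k ∈ Finset.range n, dBelow e ℓ n κ (subShape pos k) (pos (k + 1))

/-- The codegree of a standard tableau. -/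
def codegTab (e ℓ n : ℕ) (κ : ℕ → ℤ) (pos : ℕ → Node) : ℤ :=
  ∑ k ∈ Finset.range n, dAbove e ℓ n κ (subShape pos k) (pos (k + 1))

/-- `(Λ, β)` where `β = Σ_k α_{res(k)}` for the residue sequence of `pos`. -/
def lamBeta (e ℓ n : ℕ) (κ : ℕ → ℤ) (pos : ℕ → Node) : ℤ :=
  ∑ k ∈ Finset.range n,
    (((Finset.range ℓ).filter fun l => ((κ l : ZMod e)) = resOf e κ (pos (k + 1))).card : ℤ)

/-- `(β, β)` for `β = Σ_k α_{res(k)}`. -/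
def betaBeta (e ℓ n : ℕ) (κ : ℕ → ℤ) (pos : ℕ → Node) : ℤ :=
  ∑ j ∈ Finset.range n, ∑ k ∈ Finset.range n,
    cartanInt e (resOf e κ (pos (j + 1))) (resOf e κ (pos (k + 1)))

/-- The defect `(Λ, β) - (β, β)/2` of the block containing `pos`. -/
def defectOf (e ℓ n : ℕ) (κ : ℕ → ℤ) (pos : ℕ → Node) : ℤ :=
  lamBeta e ℓ n κ pos - betaBeta e ℓ n κ pos / 2

/-- The conjugate of a node (for a shape with `ℓ` components). -/
def conjNode (ℓ : ℕ) (x : Node) : Node := (ℓ - 1 - x.1, x.2.2, x.2.1)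

/-- The sequence obtained by swapping places `s` and `s+1`. -/
def swapSeq {e : ℕ} (s : ℕ) (i : ℕ → ZMod e) : ℕ → ZMod e :=
  fun k => if k = s then i (s + 1) else if k = s + 1 then i s else i k


/-- The cyclotomic quiver Hecke (KLR) algebra `R_n^Λ` of type `Γ_e`: an `R`-algebra `A`
with generators satisfying the KLR relations, together with its grading and the graded
anti-involution fixing the generators.  Idempotents are indexed by residue sequences
`i : ℕ → ZMod e` (only the values at `1,…,n` matter); `Λm j = (Λ, α_j)`. -/
structure KLR (R : Type*) [CommRing R] (A : Type*) [Ring A] [Algebra R A]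
    (e n : ℕ) (Λm : ZMod e → ℕ) where
  E : (ℕ → ZMod e) → A
  Y : ℕ → A
  Psi : ℕ → A
  star : A →ₗ[R] A
  GS : ℤ → Submodule R A
  E_ext : ∀ i j : ℕ → ZMod e, (∀ k, 1 ≤ k → k ≤ n → i k = j k) → E i = E j
  orth : ∀ i j : ℕ → ZMod e,
      E i * E j = if (∀ k, 1 ≤ k → k ≤ n → i k = j k) then E i else 0
  sumE : ∀ S : Finset (ℕ → ZMod e),
      (∀ j ∈ S, ∀ j' ∈ S, (∀ k, 1 ≤ k → k ≤ n → j k = j' k) → j = j') →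
      (∀ i : ℕ → ZMod e, ∃ j ∈ S, ∀ k, 1 ≤ k → k ≤ n → i k = j k) →
      ∑ j ∈ S, E j = 1
  cyc : ∀ i : ℕ → ZMod e, Y 1 ^ (Λm (i 1)) * E i = 0
  YE : ∀ (i : ℕ → ZMod e) (r : ℕ), Y r * E i = E i * Y r
  PsiE : ∀ (i : ℕ → ZMod e) (s : ℕ), Psi s * E i = E (swapSeq s i) * Psi s
  YY : ∀ r s, Y r * Y s = Y s * Y r
  PsiY : ∀ r s, 1 ≤ s → s < n → r ≠ s → r ≠ s + 1 → Psi s * Y r = Y r * Psi s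
  PsiPsi : ∀ r s, r + 1 < s ∨ s + 1 < r → Psi r * Psi s = Psi s * Psi r
  PsiYE : ∀ (i : ℕ → ZMod e) (r : ℕ), 1 ≤ r → r < n →
      Psi r * Y (r + 1) * E i =
        (if i r = i (r + 1) then Y r * Psi r + 1 else Y r * Psi r) * E i
  YPsiE : ∀ (i : ℕ → ZMod e) (r : ℕ), 1 ≤ r → r < n →
      Y (r + 1) * Psi r * E i =
        (if i r = i (r + 1) then Psi r * Y r + 1 else Psi r * Y r) * E i
  PsiSq : ∀ (i : ℕ → ZMod e) (r : ℕ), 1 ≤ r → r < n →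
      Psi r * Psi r * E i =
        if i r = i (r + 1) then 0
        else if i (r + 1) ≠ i r + 1 ∧ i (r + 1) ≠ i r - 1 then E i
        else if e ≠ 2 ∧ i (r + 1) = i r + 1 then (Y (r + 1) - Y r) * E i
        else if e ≠ 2 ∧ i (r + 1) = i r - 1 then (Y r - Y (r + 1)) * E i
        else (Y (r + 1) - Y r) * (Y r - Y (r + 1)) * E i
  braid : ∀ (i : ℕ → ZMod e) (r : ℕ), 1 ≤ r → r + 1 < n →
      Psi r * Psi (r + 1) * Psi r * E i =
        (if e ≠ 2 ∧ i (r + 2) = i r ∧ i (r + 1) = i r + 1 then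
            Psi (r + 1) * Psi r * Psi (r + 1) + 1
         else if e ≠ 2 ∧ i (r + 2) = i r ∧ i r = i (r + 1) + 1 then
            Psi (r + 1) * Psi r * Psi (r + 1) - 1
         else if e = 2 ∧ i (r + 2) = i r ∧ i r = i (r + 1) + 1 then
            Psi (r + 1) * Psi r * Psi (r + 1) + Y r - Y (r + 1) - Y (r + 1) + Y (r + 2)
         else Psi (r + 1) * Psi r * Psi (r + 1)) * E i
  star_mul : ∀ a b, star (a * b) = star b * star a
  star_E : ∀ i, star (E i) = E i
  star_Y : ∀ r, star (Y r) = Y r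
  star_Psi : ∀ s, star (Psi s) = Psi s
  E_mem : ∀ i, E i ∈ GS 0
  Y_mem : ∀ r, Y r ∈ GS 2
  Psi_mem : ∀ (i : ℕ → ZMod e) (s : ℕ), Psi s * E i ∈ GS (-(cartanInt e (i s) (i (s + 1))))
  GS_mul : ∀ (d d' : ℤ) (a b : A), a ∈ GS d → b ∈ GS d' → a * b ∈ GS (d + d')

namespace KLR

variable {R : Type*} [CommRing R] {A : Type*} [Ring A] [Algebra R A]
  {e n : ℕ} {Λm : ZMod e → ℕ}

/-- `ψ_{i₁} ⋯ ψ_{i_k}` for a (reduced) word. -/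
def psiWord (Kk : KLR R A e n Λm) (L : List ℕ) : A := (L.map Kk.Psi).prod

/-- The residue sequence of a tableau. -/
def resSeq (e : ℕ) (κ : ℕ → ℤ) (pos : ℕ → Node) : ℕ → ZMod e := fun k => resOf e κ (pos k)

/-- The monomial `y_μ = y_1^{d_1} ⋯ y_n^{d_n}` of Hu–Mathas, where `tpos = t^μ` and
`d_m = d_{A_m}(μ_m)`. -/
def yMu (Kk : KLR R A e n Λm) (ℓ : ℕ) (κ : ℕ → ℤ) (tpos : ℕ → Node) : A :=
  ((List.range n).map fun m0 =>
    Kk.Y (m0 + 1) ^ (dBelow e ℓ n κ (subShape tpos m0) (tpos (m0 + 1))).toNat).prod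

/-- The monomial `y'_μ = y_1^{d'_1} ⋯ y_n^{d'_n}`, computed from `t_{μ'}`, the conjugate
of `tpos = t^μ`, with `d'_m = d^{A'_m}(μ'_m)`. -/
def yMu' (Kk : KLR R A e n Λm) (ℓ : ℕ) (κ : ℕ → ℤ) (tpos : ℕ → Node) : A :=
  ((List.range n).map fun m0 =>
    Kk.Y (m0 + 1) ^
      (dAbove e ℓ n κ (subShape (fun k => conjNode ℓ (tpos k)) m0)
        (conjNode ℓ (tpos (m0 + 1)))).toNat).prod

/-- The Hu–Mathas basis element `ψ_{st} = ψ_{d(s)}^⋆ e_μ y_μ ψ_{d(t)}`, where `tpos = t^μ`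
and `ws, wt` are the chosen reduced words for `d(s), d(t)`. -/
def psiST (Kk : KLR R A e n Λm) (ℓ : ℕ) (κ : ℕ → ℤ) (tpos : ℕ → Node)
    (ws wt : List ℕ) : A :=
  Kk.star (Kk.psiWord ws) * Kk.E (resSeq e κ tpos) * Kk.yMu ℓ κ tpos * Kk.psiWord wt

/-- The dual basis element `ψ'_{st} = ψ_{d(s)}^⋆ e'_μ y'_μ ψ_{d(t)}`, where
`e'_μ = e(res(t_{μ'}))` and `t_{μ'}` is the conjugate of `tpos = t^μ`. -/
def psiST' (Kk : KLR R A e n Λm) (ℓ : ℕ) (κ : ℕ → ℤ) (tpos : ℕ → Node)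
    (ws wt : List ℕ) : A :=
  Kk.star (Kk.psiWord ws) * Kk.E (resSeq e κ fun k => conjNode ℓ (tpos k)) *
    Kk.yMu' ℓ κ tpos * Kk.psiWord wt

end KLR


/-! ### Auxiliary development for Statement 4 -/

section Statement4Aux

/-! #### `FixesOutside` basics -/

lemma fixesOutside_one (n : ℕ) : FixesOutside 1 1 n := fun _ _ => rfl

lemma fixesOutside_mul {u v : Equiv.Perm ℕ} {n : ℕ} (hu : FixesOutside u 1 n)
    (hv : FixesOutside v 1 n) : FixesOutside (u * v) 1 n := fun k hk => by
  simp only [Equiv.Perm.mul_apply, hv k hk, hu k hk]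

lemma swapP_apply_of_ne {r k : ℕ} (h1 : k ≠ r) (h2 : k ≠ r + 1) : swapP r k = k :=
  Equiv.swap_apply_of_ne_of_ne h1 h2

lemma swapP_apply_left (r : ℕ) : swapP r r = r + 1 := Equiv.swap_apply_left r (r+1)

lemma swapP_apply_right (r : ℕ) : swapP r (r+1) = r := Equiv.swap_apply_right r (r+1)

lemma swapP_swapP (r k : ℕ) : swapP r (swapP r k) = k := Equiv.swap_apply_self _ _ _

lemma swapP_mul_self (r : ℕ) : swapP r * swapP r = 1 := Equiv.swap_mul_self _ _

lemma fixesOutside_swapP {r n : ℕ} (h1 : 1 ≤ r) (h2 : r < n) : FixesOutside (swapP r) 1 n :=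
  fun k hk => swapP_apply_of_ne (by omega) (by omega)

lemma fixesOutside_inv {w : Equiv.Perm ℕ} {n : ℕ} (hw : FixesOutside w 1 n) :
    FixesOutside w⁻¹ 1 n := by
  intro k hk
  have h := hw k hk
  calc w⁻¹ k = w⁻¹ (w k) := by rw [h]
  _ = k := Equiv.symm_apply_apply w k

lemma fixesOutside_apply_mem {w : Equiv.Perm ℕ} {n k : ℕ} (hw : FixesOutside w 1 n)
    (h1 : 1 ≤ k) (h2 : k ≤ n) : 1 ≤ w k ∧ w k ≤ n := by
  by_contra h
  have hk : w k < 1 ∨ n < w k := by omega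
  have h3 := hw (w k) hk
  have h4 := w.injective h3
  omega

/-! #### The counting function `cntP` -/

/-- Number of `k ∈ [1,m]` with `u k ≤ P`. -/
def cntP (u : Equiv.Perm ℕ) (m P : ℕ) : ℕ :=
  ((Finset.Icc 1 m).filter fun k => u k ≤ P).card

lemma cntP_zero (u : Equiv.Perm ℕ) (P : ℕ) : cntP u 0 P = 0 := by
  simp [cntP]

lemma Icc_one_succ (m : ℕ) : Finset.Icc 1 (m+1) = insert (m+1) (Finset.Icc 1 m) := by
  ext x; simp only [Finset.mem_Icc, Finset.mem_insert]; omega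

lemma cntP_succ (u : Equiv.Perm ℕ) (m P : ℕ) :
    cntP u (m+1) P = cntP u m P + if u (m+1) ≤ P then 1 else 0 := by
  unfold cntP
  rw [Icc_one_succ, Finset.filter_insert]
  split
  · rw [Finset.card_insert_of_notMem
      (fun h => absurd (Finset.mem_Icc.mp (Finset.mem_of_mem_filter _ h)).2 (by omega))]
  · omega

lemma swapP_mem_Icc {r m k : ℕ} (hr : 1 ≤ r) (hm : m ≠ r) (hk : k ∈ Finset.Icc 1 m) :
    swapP r k ∈ Finset.Icc 1 m := by
  simp only [Finset.mem_Icc] at hk ⊢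
  rcases eq_or_ne k r with rfl | hne1
  · rw [swapP_apply_left]; omega
  rcases eq_or_ne k (r+1) with rfl | hne2
  · rw [swapP_apply_right]; omega
  · rw [swapP_apply_of_ne hne1 hne2]; omega

lemma cntP_mul_swap_of_ne (u : Equiv.Perm ℕ) {r m : ℕ} (P : ℕ) (hr : 1 ≤ r) (hm : m ≠ r) :
    cntP (u * swapP r) m P = cntP u m P := by
  unfold cntP
  apply Finset.card_nbij' (fun k => swapP r k) (fun k => swapP r k)
  · intro a ha
    obtain ⟨h1, h2⟩ := Finset.mem_filter.mp ha
    refine Finset.mem_filter.mpr ⟨swapP_mem_Icc hr hm h1, ?_⟩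
    exact h2
  · intro a ha
    obtain ⟨h1, h2⟩ := Finset.mem_filter.mp ha
    refine Finset.mem_filter.mpr ⟨swapP_mem_Icc hr hm h1, ?_⟩
    show u (swapP r (swapP r a)) ≤ P
    rw [swapP_swapP]
    exact h2
  · intro a _; exact swapP_swapP r a
  · intro a _; exact swapP_swapP r a

lemma cntP_mul_swap_self (u : Equiv.Perm ℕ) (j P : ℕ) :
    cntP (u * swapP (j+1)) (j+1) P = cntP u j P + if u (j+1+1) ≤ P then 1 else 0 := by
  rw [cntP_succ]
  have hX : (u * swapP (j+1)) (j+1) = u (j+1+1) := by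
    rw [Equiv.Perm.mul_apply, swapP_apply_left]
  have h1 : cntP (u * swapP (j+1)) j P = cntP u j P := by
    unfold cntP
    congr 1
    apply Finset.filter_congr
    intro k hk
    have hk' := Finset.mem_Icc.mp hk
    have he : swapP (j+1) k = k := swapP_apply_of_ne (by omega) (by omega)
    show (u * swapP (j+1)) k ≤ P ↔ u k ≤ P
    rw [Equiv.Perm.mul_apply, he]
  rw [hX, h1]

/-! #### `permLength` basics -/

lemma permLength_one (n : ℕ) : permLength n 1 = 0 := by
  unfold permLength
  rw [Finset.card_eq_zero, Finset.filter_eq_empty_iff]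
  rintro p -
  simp only [Equiv.Perm.one_apply]
  omega

lemma swapP_lt_swapP {r a b : ℕ} (hab : a < b) (hne : ¬(a = r ∧ b = r+1)) :
    swapP r a < swapP r b := by
  unfold swapP
  rw [Equiv.swap_apply_def, Equiv.swap_apply_def]
  split_ifs <;> omega

lemma permLength_mul_swap_lt (n : ℕ) (w : Equiv.Perm ℕ) {r : ℕ} (hr1 : 1 ≤ r) (hrn : r < n)
    (h : w r < w (r+1)) : permLength n (w * swapP r) = permLength n w + 1 := by
  have hmemD : ((r, r+1) : ℕ × ℕ) ∈ (Finset.Icc 1 n) ×ˢ (Finset.Icc 1 n) := by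
    simp only [Finset.mem_product, Finset.mem_Icc]; omega
  have hpF : ((r, r+1) : ℕ × ℕ) ∈ ((Finset.Icc 1 n) ×ˢ (Finset.Icc 1 n)).filter
      (fun p => p.1 < p.2 ∧ (w * swapP r) p.2 < (w * swapP r) p.1) := by
    refine Finset.mem_filter.mpr ⟨hmemD, by omega, ?_⟩
    show (w * swapP r) (r+1) < (w * swapP r) r
    rw [Equiv.Perm.mul_apply, Equiv.Perm.mul_apply, swapP_apply_left, swapP_apply_right]
    exact h
  have hswap_fst : ∀ p : ℕ × ℕ, swapP r p.1 = r → p.1 = r + 1 := by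
    intro p e
    have := congrArg (swapP r) e
    rwa [swapP_swapP, swapP_apply_left] at this
  have hswap_snd : ∀ p : ℕ × ℕ, swapP r p.2 = r + 1 → p.2 = r := by
    intro p e
    have := congrArg (swapP r) e
    rwa [swapP_swapP, swapP_apply_right] at this
  have hcard : ((((Finset.Icc 1 n) ×ˢ (Finset.Icc 1 n)).filter
      (fun p => p.1 < p.2 ∧ (w * swapP r) p.2 < (w * swapP r) p.1)).erase (r, r+1)).card
      = permLength n w := by
    unfold permLength
    apply Finset.card_nbij' (fun p => (swapP r p.1, swapP r p.2))
      (fun p => (swapP r p.1, swapP r p.2))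
    · intro p hp
      obtain ⟨hne, hp2⟩ := Finset.mem_erase.mp hp
      obtain ⟨hD, hlt, hinv⟩ := Finset.mem_filter.mp hp2
      obtain ⟨hD1, hD2⟩ := Finset.mem_product.mp hD
      have hne' : ¬(p.1 = r ∧ p.2 = r + 1) := by
        intro ⟨e1, e2⟩
        exact hne (Prod.ext e1 e2)
      refine Finset.mem_filter.mpr ⟨Finset.mem_product.mpr
        ⟨swapP_mem_Icc hr1 (by omega) hD1, swapP_mem_Icc hr1 (by omega) hD2⟩,
        swapP_lt_swapP hlt hne', ?_⟩
      simpa only [Equiv.Perm.mul_apply] using hinv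
    · intro p hp
      obtain ⟨hD, hlt, hinv⟩ := Finset.mem_filter.mp hp
      obtain ⟨hD1, hD2⟩ := Finset.mem_product.mp hD
      have hne' : ¬(p.1 = r ∧ p.2 = r + 1) := by
        intro ⟨e1, e2⟩
        rw [e1, e2] at hinv
        omega
      refine Finset.mem_erase.mpr ⟨?_, Finset.mem_filter.mpr ⟨Finset.mem_product.mpr
        ⟨swapP_mem_Icc hr1 (by omega) hD1, swapP_mem_Icc hr1 (by omega) hD2⟩,
        swapP_lt_swapP hlt hne', ?_⟩⟩
      · intro heq
        have e1 : swapP r p.1 = r := congrArg Prod.fst heq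
        have e2 : swapP r p.2 = r + 1 := congrArg Prod.snd heq
        have := hswap_fst p e1
        have := hswap_snd p e2
        omega
      · show (w * swapP r) (swapP r p.2) < (w * swapP r) (swapP r p.1)
        rw [Equiv.Perm.mul_apply, Equiv.Perm.mul_apply, swapP_swapP, swapP_swapP]
        exact hinv
    · intro p _
      exact Prod.ext (swapP_swapP r p.1) (swapP_swapP r p.2)
    · intro p _
      exact Prod.ext (swapP_swapP r p.1) (swapP_swapP r p.2)
  have h9 := Finset.card_erase_add_one hpF
  unfold permLength at hcard ⊢
  omega

lemma permLength_mul_swap_gt (n : ℕ) (w : Equiv.Perm ℕ) {r : ℕ} (hr1 : 1 ≤ r) (hrn : r < n)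
    (h : w (r+1) < w r) : permLength n w = permLength n (w * swapP r) + 1 := by
  have h2 : (w * swapP r) r < (w * swapP r) (r+1) := by
    rw [Equiv.Perm.mul_apply, Equiv.Perm.mul_apply, swapP_apply_left, swapP_apply_right]
    exact h
  have h3 := permLength_mul_swap_lt n (w * swapP r) hr1 hrn h2
  rwa [mul_assoc, swapP_mul_self, mul_one] at h3

/-! #### `wordProd` basics -/

lemma wordProd_nil : wordProd [] = 1 := rfl

lemma wordProd_cons (a : ℕ) (L : List ℕ) : wordProd (a :: L) = swapP a * wordProd L := by
  unfold wordProd; rw [List.map_cons, List.prod_cons]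

lemma wordProd_concat (L : List ℕ) (a : ℕ) : wordProd (L ++ [a]) = wordProd L * swapP a := by
  unfold wordProd
  rw [List.map_append, List.prod_append, List.map_singleton, List.prod_singleton]

lemma fixesOutside_wordProd {n : ℕ} : ∀ (L : List ℕ), (∀ i ∈ L, 1 ≤ i ∧ i < n) →
    FixesOutside (wordProd L) 1 n := by
  intro L
  induction L with
  | nil => intro _; exact fixesOutside_one n
  | cons a L ih =>
    intro h
    rw [wordProd_cons]
    exact fixesOutside_mul (fixesOutside_swapP (h a (by simp)).1 (h a (by simp)).2)
      (ih fun i hi => h i (by simp [hi]))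

lemma permLength_wordProd_le {n : ℕ} : ∀ (L : List ℕ), (∀ i ∈ L, 1 ≤ i ∧ i < n) →
    permLength n (wordProd L) ≤ L.length := by
  intro L
  induction L using List.reverseRecOn with
  | nil => intro _; simp [wordProd_nil, permLength_one]
  | append_singleton L a ih =>
    intro h
    have ha := h a (by simp)
    have hL : ∀ i ∈ L, 1 ≤ i ∧ i < n := fun i hi => h i (by simp [hi])
    have hIH := ih hL
    rw [wordProd_concat, List.length_append, List.length_singleton]
    rcases lt_trichotomy ((wordProd L) a) ((wordProd L) (a+1)) with hlt | heq | hgt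
    · rw [permLength_mul_swap_lt n _ ha.1 ha.2 hlt]; omega
    · exact absurd ((wordProd L).injective heq) (by omega)
    · have := permLength_mul_swap_gt n _ ha.1 ha.2 hgt; omega

lemma reduced_nil (n : ℕ) : IsReducedWord n [] :=
  ⟨fun i hi => absurd hi List.not_mem_nil, by simp [wordProd_nil, permLength_one]⟩

lemma reduced_concat {n : ℕ} {L : List ℕ} {a : ℕ} (h : IsReducedWord n (L ++ [a])) :
    IsReducedWord n L ∧ (wordProd L) a < (wordProd L) (a+1) := by
  obtain ⟨hmem, hlen⟩ := h
  have ha := hmem a (by simp)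
  have hmemL : ∀ i ∈ L, 1 ≤ i ∧ i < n := fun i hi => hmem i (by simp [hi])
  have hle := permLength_wordProd_le (n := n) L hmemL
  rw [wordProd_concat, List.length_append, List.length_singleton] at hlen
  have hasc : (wordProd L) a < (wordProd L) (a+1) := by
    rcases lt_trichotomy ((wordProd L) a) ((wordProd L) (a+1)) with hlt | heq | hgt
    · exact hlt
    · exact absurd ((wordProd L).injective heq) (by omega)
    · exfalso
      have := permLength_mul_swap_gt n _ ha.1 ha.2 hgt
      omega
  have h2 := permLength_mul_swap_lt n _ ha.1 ha.2 hasc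
  exact ⟨⟨hmemL, by omega⟩, hasc⟩

/-! #### The counting order `DLE` -/

/-- `u ≤ w` in the counting (rank-matrix) characterization of Bruhat order. -/
def DLE (u w : Equiv.Perm ℕ) : Prop := ∀ m P, cntP w m P ≤ cntP u m P

lemma cntP_mul_swap_le {w : Equiv.Perm ℕ} {r : ℕ} (hr : 1 ≤ r) (hw : w r < w (r+1))
    (m P : ℕ) : cntP (w * swapP r) m P ≤ cntP w m P := by
  obtain ⟨j, rfl⟩ : ∃ j, r = j+1 := ⟨r-1, by omega⟩
  by_cases hm : m = j+1
  · subst hm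
    rw [cntP_mul_swap_self]
    rw [show cntP w (j+1) P = cntP w j P + if w (j+1) ≤ P then 1 else 0 from cntP_succ w j P]
    split_ifs <;> omega
  · rw [cntP_mul_swap_of_ne w P hr hm]

lemma dle_lift_up {u w : Equiv.Perm ℕ} {r : ℕ} (hr : 1 ≤ r) (h : DLE u w)
    (hu : u r < u (r+1)) (hw : w r < w (r+1)) : DLE (u * swapP r) (w * swapP r) := by
  obtain ⟨j, rfl⟩ : ∃ j, r = j+1 := ⟨r-1, by omega⟩
  intro m P
  by_cases hm : m = j+1
  · subst hm
    rw [cntP_mul_swap_self, cntP_mul_swap_self]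
    have h0 := h j P
    have h2 := h (j+1+1) P
    simp only [cntP_succ] at h2
    split_ifs at h2 ⊢ <;> omega
  · rw [cntP_mul_swap_of_ne u P hr hm, cntP_mul_swap_of_ne w P hr hm]
    exact h m P

lemma dle_lift_down_desc {u w : Equiv.Perm ℕ} {r : ℕ} (hr : 1 ≤ r) (h : DLE u w)
    (hu : u (r+1) < u r) (hw : w (r+1) < w r) : DLE (u * swapP r) (w * swapP r) := by
  obtain ⟨j, rfl⟩ : ∃ j, r = j+1 := ⟨r-1, by omega⟩
  intro m P
  by_cases hm : m = j+1
  · subst hm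
    rw [cntP_mul_swap_self, cntP_mul_swap_self]
    have h0 := h j P
    have h2 := h (j+1+1) P
    simp only [cntP_succ] at h2
    split_ifs at h2 ⊢ <;> omega
  · rw [cntP_mul_swap_of_ne u P hr hm, cntP_mul_swap_of_ne w P hr hm]
    exact h m P

lemma dle_lift_down_asc {u w : Equiv.Perm ℕ} {r : ℕ} (hr : 1 ≤ r) (h : DLE u w)
    (hu : u r < u (r+1)) (hw : w (r+1) < w r) : DLE u (w * swapP r) := by
  obtain ⟨j, rfl⟩ : ∃ j, r = j+1 := ⟨r-1, by omega⟩
  intro m P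
  by_cases hm : m = j+1
  · subst hm
    rw [cntP_mul_swap_self]
    rw [show cntP u (j+1) P = cntP u j P + if u (j+1) ≤ P then 1 else 0 from cntP_succ u j P]
    have h0 := h j P
    have h2 := h (j+1+1) P
    simp only [cntP_succ] at h2
    split_ifs at h2 ⊢ <;> omega
  · rw [cntP_mul_swap_of_ne w P hr hm]
    exact h m P

lemma eq_one_of_dle_one {n : ℕ} {u : Equiv.Perm ℕ} (hu : FixesOutside u 1 n)
    (h : DLE u 1) : u = 1 := by
  have hle : ∀ k, 1 ≤ k → u k ≤ k := by
    intro k hk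
    have h1 : cntP (1 : Equiv.Perm ℕ) k k = k := by
      unfold cntP
      rw [Finset.filter_true_of_mem (fun x hx => by
        simp only [Equiv.Perm.one_apply]
        exact (Finset.mem_Icc.mp hx).2)]
      rw [Nat.card_Icc]; omega
    have h2 : cntP u k k ≤ k := by
      refine le_trans (Finset.card_filter_le _ _) ?_
      rw [Nat.card_Icc]; omega
    have h3 := h k k
    have heq : cntP u k k = k := by omega
    have hset : ((Finset.Icc 1 k).filter fun x => u x ≤ k) = Finset.Icc 1 k := by
      apply Finset.eq_of_subset_of_card_le (Finset.filter_subset _ _)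
      show (Finset.Icc 1 k).card ≤ cntP u k k
      rw [heq, Nat.card_Icc]; omega
    have hkmem : k ∈ Finset.Icc 1 k := Finset.mem_Icc.mpr ⟨hk, le_refl k⟩
    rw [← hset] at hkmem
    exact (Finset.mem_filter.mp hkmem).2
  have hfix : ∀ k, u k = k := by
    intro k
    induction k using Nat.strong_induction_on with
    | _ k ihk =>
      rcases Nat.eq_zero_or_pos k with rfl | hk1
      · exact hu 0 (by omega)
      have hk := hle k hk1
      rcases eq_or_lt_of_le hk with he | hlt
      · exact he
      · exfalso
        have h5 := ihk (u k) hlt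
        have := u.injective (show u k = u (u k) from h5.symm)
        omega
  exact Equiv.ext fun k => by rw [hfix k]; rfl

lemma exists_descent {n : ℕ} {w : Equiv.Perm ℕ} (hw : FixesOutside w 1 n) (hne : w ≠ 1) :
    ∃ r, 1 ≤ r ∧ r < n ∧ w (r+1) < w r := by
  by_contra hcon
  push_neg at hcon
  have hasc : ∀ r, 1 ≤ r → r < n → w r < w (r+1) := by
    intro r h1 h2
    have hne' : w r ≠ w (r+1) := fun e => by have := w.injective e; omega
    have h3 := hcon r h1 h2
    omega
  have hmono : ∀ b a, 1 ≤ a → a < b → b ≤ n → w a < w b := by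
    intro b
    induction b with
    | zero => intro a _ h _; omega
    | succ b ihb =>
      intro a h1 hab hbn
      rcases Nat.lt_succ_iff_lt_or_eq.mp hab with hx | hx
      · exact lt_trans (ihb a h1 hx (by omega)) (hasc b (by omega) (by omega))
      · subst hx; exact hasc a h1 (by omega)
  apply hne
  have hfix : ∀ k, w k = k := by
    intro k
    induction k using Nat.strong_induction_on with
    | _ k ihk =>
      by_cases hk : 1 ≤ k ∧ k ≤ n
      · have hwk := fixesOutside_apply_mem hw hk.1 hk.2
        have hge : k ≤ w k := by
          by_contra hlt
          push_neg at hlt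
          have h5 := ihk (w k) hlt
          have := w.injective (show w k = w (w k) from h5.symm)
          omega
        have hgt : w k ≤ k := by
          by_contra hgt'
          push_neg at hgt'
          have hak := fixesOutside_apply_mem (fixesOutside_inv hw) hk.1 hk.2
          have hwa : w (w⁻¹ k) = k := Equiv.apply_symm_apply w k
          have hane : w⁻¹ k ≠ k := fun e => by rw [e] at hwa; omega
          have hagt : k < w⁻¹ k := by
            rcases lt_or_gt_of_ne hane with hx | hx
            · exfalso
              have h5 := ihk (w⁻¹ k) hx
              rw [h5] at hwa
              omega
            · exact hx
          have := hmono (w⁻¹ k) k hk.1 hagt hak.2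
          omega
        omega
      · exact hw k (by omega)
  exact Equiv.ext fun k => by rw [hfix k]; rfl

lemma exists_reducedWord {n : ℕ} : ∀ N (w : Equiv.Perm ℕ), permLength n w ≤ N →
    FixesOutside w 1 n → ∃ L, IsReducedWord n L ∧ wordProd L = w := by
  intro N
  induction N with
  | zero =>
    intro w hN hw
    have hw1 : w = 1 := by
      by_contra hne
      obtain ⟨r, hr1, hrn, hdesc⟩ := exists_descent hw hne
      have := permLength_mul_swap_gt n w hr1 hrn hdesc
      omega
    exact ⟨[], reduced_nil n, by rw [wordProd_nil, hw1]⟩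
  | succ N ih =>
    intro w hN hw
    by_cases hne : w = 1
    · exact ⟨[], reduced_nil n, by rw [wordProd_nil, hne]⟩
    obtain ⟨r, hr1, hrn, hdesc⟩ := exists_descent hw hne
    have hlen := permLength_mul_swap_gt n w hr1 hrn hdesc
    obtain ⟨L, hred, hprod⟩ := ih (w * swapP r) (by omega)
      (fixesOutside_mul hw (fixesOutside_swapP hr1 hrn))
    refine ⟨L ++ [r], ⟨?_, ?_⟩, ?_⟩
    · intro i hi
      rcases List.mem_append.mp hi with hx | hx
      · exact hred.1 i hx
      · simp only [List.mem_singleton] at hx; subst hx; exact ⟨hr1, hrn⟩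
    · rw [wordProd_concat, hprod, mul_assoc, swapP_mul_self, mul_one,
        List.length_append, List.length_singleton]
      have := hred.2
      rw [hprod] at this
      omega
    · rw [wordProd_concat, hprod, mul_assoc, swapP_mul_self, mul_one]

lemma dle_of_sublist {n : ℕ} : ∀ (ww : List ℕ), IsReducedWord n ww →
    ∀ uw, IsReducedWord n uw → uw.Sublist ww → DLE (wordProd uw) (wordProd ww) := by
  intro ww
  induction ww using List.reverseRecOn with
  | nil =>
    intro _ uw _ hs
    rw [List.sublist_nil.mp hs]
    exact fun m P => le_refl _
  | append_singleton L a ih =>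
    intro hred uw hredu hs
    obtain ⟨hredL, hascL⟩ := reduced_concat hred
    have ha := hred.1 a (by simp)
    rw [List.sublist_append_iff] at hs
    obtain ⟨l₁, l₂, rfl, hs1, hs2⟩ := hs
    rcases List.sublist_singleton.mp hs2 with rfl | rfl
    · rw [List.append_nil] at hredu ⊢
      have hd := ih hredL l₁ hredu hs1
      intro m P
      rw [wordProd_concat]
      exact le_trans (cntP_mul_swap_le ha.1 hascL m P) (hd m P)
    · obtain ⟨hredl₁, hascU⟩ := reduced_concat hredu
      have hd := ih hredL l₁ hredl₁ hs1
      rw [wordProd_concat, wordProd_concat]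
      exact dle_lift_up ha.1 hd hascU hascL

lemma bruhatLE_of_dle {n : ℕ} : ∀ N (u w : Equiv.Perm ℕ), permLength n w ≤ N →
    FixesOutside u 1 n → FixesOutside w 1 n → DLE u w → BruhatLE n u w := by
  intro N
  induction N with
  | zero =>
    intro u w hN hu hw hD
    have hw1 : w = 1 := by
      by_contra hne
      obtain ⟨r, hr1, hrn, hdesc⟩ := exists_descent hw hne
      have := permLength_mul_swap_gt n w hr1 hrn hdesc
      omega
    subst hw1
    have hu1 : u = 1 := eq_one_of_dle_one hu hD
    subst hu1
    exact ⟨[], [], reduced_nil n, wordProd_nil, List.Sublist.refl [], reduced_nil n, wordProd_nil⟩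
  | succ N ih =>
    intro u w hN hu hw hD
    by_cases hne : w = 1
    · subst hne
      have hu1 : u = 1 := eq_one_of_dle_one hu hD
      subst hu1
      exact ⟨[], [], reduced_nil n, wordProd_nil, List.Sublist.refl [], reduced_nil n, wordProd_nil⟩
    obtain ⟨r, hr1, hrn, hdesc⟩ := exists_descent hw hne
    have hlen := permLength_mul_swap_gt n w hr1 hrn hdesc
    have hw' : FixesOutside (w * swapP r) 1 n :=
      fixesOutside_mul hw (fixesOutside_swapP hr1 hrn)
    by_cases hud : u (r+1) < u r
    · have hu' : FixesOutside (u * swapP r) 1 n :=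
        fixesOutside_mul hu (fixesOutside_swapP hr1 hrn)
      have hD' : DLE (u * swapP r) (w * swapP r) := dle_lift_down_desc hr1 hD hud hdesc
      obtain ⟨ww', uw', hrw, hpw, hsub, hru, hpu⟩ :=
        ih (u * swapP r) (w * swapP r) (by omega) hu' hw' hD'
      have husasc : (u * swapP r) r < (u * swapP r) (r+1) := by
        rw [Equiv.Perm.mul_apply, Equiv.Perm.mul_apply, swapP_apply_left, swapP_apply_right]
        exact hud
      have hulen := permLength_mul_swap_lt n (u * swapP r) hr1 hrn husasc
      rw [mul_assoc, swapP_mul_self, mul_one] at hulen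
      refine ⟨ww' ++ [r], uw' ++ [r], ⟨?_, ?_⟩, ?_, hsub.append (List.Sublist.refl [r]),
        ⟨?_, ?_⟩, ?_⟩
      · intro i hi
        rcases List.mem_append.mp hi with hx | hx
        · exact hrw.1 i hx
        · simp only [List.mem_singleton] at hx; subst hx; exact ⟨hr1, hrn⟩
      · rw [wordProd_concat, hpw, mul_assoc, swapP_mul_self, mul_one,
          List.length_append, List.length_singleton]
        have := hrw.2
        rw [hpw] at this
        omega
      · rw [wordProd_concat, hpw, mul_assoc, swapP_mul_self, mul_one]
      · intro i hi
        rcases List.mem_append.mp hi with hx | hx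
        · exact hru.1 i hx
        · simp only [List.mem_singleton] at hx; subst hx; exact ⟨hr1, hrn⟩
      · rw [wordProd_concat, hpu, mul_assoc, swapP_mul_self, mul_one,
          List.length_append, List.length_singleton]
        have := hru.2
        rw [hpu] at this
        omega
      · rw [wordProd_concat, hpu, mul_assoc, swapP_mul_self, mul_one]
    · push_neg at hud
      have huasc : u r < u (r+1) := by
        rcases eq_or_lt_of_le hud with he | hlt
        · exact absurd (u.injective he) (by omega)
        · exact hlt
      have hD' : DLE u (w * swapP r) := dle_lift_down_asc hr1 hD huasc hdesc
      obtain ⟨ww', uw', hrw, hpw, hsub, hru, hpu⟩ :=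
        ih u (w * swapP r) (by omega) hu hw' hD'
      refine ⟨ww' ++ [r], uw', ⟨?_, ?_⟩, ?_,
        hsub.trans (List.sublist_append_left ww' [r]), hru, hpu⟩
      · intro i hi
        rcases List.mem_append.mp hi with hx | hx
        · exact hrw.1 i hx
        · simp only [List.mem_singleton] at hx; subst hx; exact ⟨hr1, hrn⟩
      · rw [wordProd_concat, hpw, mul_assoc, swapP_mul_self, mul_one,
          List.length_append, List.length_singleton]
        have := hrw.2
        rw [hpw] at this
        omega
      · rw [wordProd_concat, hpw, mul_assoc, swapP_mul_self, mul_one]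

end Statement4Aux


section Statement4Tab

/-! #### Tableau-side combinatorics -/

/-- `x` lies in a component `< l`, or in component `l` in a row `< i`. -/
def nodeLT (x : Node) (l i : ℕ) : Prop := x.1 < l ∨ (x.1 = l ∧ x.2.1 < i)

lemma tabPsum_eq_card (pos : ℕ → Node) (m l i : ℕ) :
    tabPsum pos m l i = ((Finset.Icc 1 m).filter fun a => nodeLT (pos a) l i).card := by
  have hdisj : Disjoint ((Finset.Icc 1 m).filter fun a => (pos a).1 < l)
      ((Finset.Icc 1 m).filter fun a => (pos a).1 = l ∧ (pos a).2.1 < i) := by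
    rw [Finset.disjoint_left]
    intro a ha hb
    have h1 := (Finset.mem_filter.mp ha).2
    have h2 := (Finset.mem_filter.mp hb).2
    omega
  have hsplit : ((Finset.Icc 1 m).filter fun a => nodeLT (pos a) l i).card
      = ((Finset.Icc 1 m).filter fun a => (pos a).1 < l).card
        + ((Finset.Icc 1 m).filter fun a => (pos a).1 = l ∧ (pos a).2.1 < i).card := by
    rw [← Finset.card_union_of_disjoint hdisj]
    congr 1
    ext a
    simp only [Finset.mem_filter, Finset.mem_union]
    unfold nodeLT
    tauto
  rw [hsplit]
  unfold tabPsum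
  congr 1
  · rw [Finset.card_eq_sum_card_fiberwise (f := fun a => (pos a).1) (t := Finset.range l)
      (fun x hx => Finset.mem_range.mpr (Finset.mem_filter.mp hx).2)]
    apply Finset.sum_congr rfl
    intro k hk
    have hk' := Finset.mem_range.mp hk
    unfold compcnt
    congr 1
    rw [Finset.filter_filter]
    apply Finset.filter_congr
    intro a _
    beta_reduce
    omega
  · rw [Finset.card_eq_sum_card_fiberwise (f := fun a => (pos a).2.1) (t := Finset.range i)
      (fun x hx => Finset.mem_range.mpr (Finset.mem_filter.mp hx).2.2)]
    apply Finset.sum_congr rfl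
    intro j hj
    have hj' := Finset.mem_range.mp hj
    unfold cnt
    congr 1
    rw [Finset.filter_filter]
    apply Finset.filter_congr
    intro a _
    beta_reduce
    omega

lemma cnt_eq_rowLen {ℓ n : ℕ} {μ : Multicomp ℓ n} {pos : ℕ → Node} (ht : IsTableau μ pos)
    (l r : ℕ) : cnt pos n l r = μ.rowLen l r := by
  unfold cnt
  rw [← Finset.card_range (μ.rowLen l r)]
  apply Finset.card_bij (fun k _ => (pos k).2.2)
  · intro a ha
    obtain ⟨hIcc, h1, h2⟩ := Finset.mem_filter.mp ha
    have ha' := Finset.mem_Icc.mp hIcc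
    have hmem := ht.2.1 a ha'.1 ha'.2
    unfold Multicomp.mem at hmem
    rw [h1, h2] at hmem
    exact Finset.mem_range.mpr hmem
  · intro a₁ ha₁ a₂ ha₂ hcol
    obtain ⟨hIcc₁, h11, h12⟩ := Finset.mem_filter.mp ha₁
    obtain ⟨hIcc₂, h21, h22⟩ := Finset.mem_filter.mp ha₂
    have ha₁' := Finset.mem_Icc.mp hIcc₁
    have ha₂' := Finset.mem_Icc.mp hIcc₂
    apply ht.1 a₁ a₂ ha₁'.1 ha₁'.2 ha₂'.1 ha₂'.2
    exact Prod.ext (h11.trans h21.symm) (Prod.ext (h12.trans h22.symm) hcol)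
  · intro b hb
    have hmem : μ.mem (l, r, b) := by
      show b < μ.rowLen l r
      exact Finset.mem_range.mp hb
    obtain ⟨k, hk1, hk2, hk3⟩ := ht.2.2 (l, r, b) hmem
    refine ⟨k, Finset.mem_filter.mpr ⟨Finset.mem_Icc.mpr ⟨hk1, hk2⟩, ?_, ?_⟩, ?_⟩ <;>
      rw [hk3]

lemma list_sum_getD (xs : List ℕ) : ∑ j ∈ Finset.range xs.length, xs.getD j 0 = xs.sum := by
  induction xs with
  | nil => simp
  | cons x xs ih =>
    rw [List.length_cons, Finset.sum_range_succ', List.sum_cons]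
    simp only [List.getD_cons_succ, List.getD_cons_zero]
    omega

lemma sum_getD_le (xs : List ℕ) (i : ℕ) : ∑ j ∈ Finset.range i, xs.getD j 0 ≤ xs.sum := by
  rcases le_total i xs.length with h | h
  · calc ∑ j ∈ Finset.range i, xs.getD j 0
        ≤ ∑ j ∈ Finset.range xs.length, xs.getD j 0 :=
          Finset.sum_le_sum_of_subset (Finset.range_subset_range.mpr h)
    _ = xs.sum := list_sum_getD xs
  · rw [← list_sum_getD xs]
    apply le_of_eq
    apply (Finset.sum_subset (Finset.range_subset_range.mpr h) ?_).symm
    intro x _ hx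
    simp only [Finset.mem_range, not_lt] at hx
    exact List.getD_eq_default _ _ hx

lemma compcnt_eq_compSize {ℓ n : ℕ} {μ : Multicomp ℓ n} {pos : ℕ → Node} (ht : IsTableau μ pos)
    (l : ℕ) : compcnt pos n l = μ.compSize l := by
  unfold compcnt
  rw [Finset.card_eq_sum_card_fiberwise (f := fun a => (pos a).2.1)
      (t := Finset.range (μ.parts.getD l []).length) ?_]
  · have hc : μ.compSize l = ∑ r ∈ Finset.range (μ.parts.getD l []).length, μ.rowLen l r :=
      (list_sum_getD _).symm
    rw [hc]
    apply Finset.sum_congr rfl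
    intro r _
    rw [← cnt_eq_rowLen ht l r]
    unfold cnt
    congr 1
    rw [Finset.filter_filter]
  · intro x hx
    obtain ⟨hIcc, hcomp⟩ := Finset.mem_filter.mp hx
    have hx' := Finset.mem_Icc.mp hIcc
    have hmem := ht.2.1 x hx'.1 hx'.2
    unfold Multicomp.mem Multicomp.rowLen at hmem
    rw [hcomp] at hmem
    rw [Finset.mem_coe, Finset.mem_range]
    by_contra hge
    push_neg at hge
    rw [List.getD_eq_default _ _ hge] at hmem
    omega

lemma tabPsum_full {ℓ n : ℕ} {μ : Multicomp ℓ n} {pos : ℕ → Node} (ht : IsTableau μ pos)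
    (l i : ℕ) : tabPsum pos n l i = μ.psum l i := by
  unfold tabPsum Multicomp.psum
  congr 1
  · exact Finset.sum_congr rfl fun k _ => compcnt_eq_compSize ht k
  · exact Finset.sum_congr rfl fun j _ => cnt_eq_rowLen ht l j

lemma psum_succ {ℓ n : ℕ} (μ : Multicomp ℓ n) (l i : ℕ) :
    μ.psum l (i+1) = μ.psum l i + μ.rowLen l i := by
  unfold Multicomp.psum
  rw [Finset.sum_range_succ]
  omega

lemma getD_map_sum : ∀ (xs : List (List ℕ)) (k : ℕ),
    (xs.map List.sum).getD k 0 = (xs.getD k []).sum := by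
  intro xs
  induction xs with
  | nil => intro k; simp
  | cons x xs ih =>
    intro k
    cases k with
    | zero => simp
    | succ k => simpa using ih k

lemma compSize_getD {ℓ n : ℕ} (μ : Multicomp ℓ n) (k : ℕ) :
    μ.compSize k = (μ.parts.map List.sum).getD k 0 := by
  unfold Multicomp.compSize
  rw [getD_map_sum]

lemma sum_compSize_le {ℓ n : ℕ} (μ : Multicomp ℓ n) (m : ℕ) :
    ∑ k ∈ Finset.range m, μ.compSize k ≤ n := by
  have he : ∑ k ∈ Finset.range m, μ.compSize k
      = ∑ k ∈ Finset.range m, (μ.parts.map List.sum).getD k 0 :=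
    Finset.sum_congr rfl fun k _ => compSize_getD μ k
  rw [he]
  calc ∑ k ∈ Finset.range m, (μ.parts.map List.sum).getD k 0
      ≤ (μ.parts.map List.sum).sum := sum_getD_le _ m
  _ = n := μ.size_eq

lemma sum_compSize_top {ℓ n : ℕ} (μ : Multicomp ℓ n) :
    ∑ k ∈ Finset.range ℓ, μ.compSize k = n := by
  have he : ∑ k ∈ Finset.range ℓ, μ.compSize k
      = ∑ k ∈ Finset.range (μ.parts.map List.sum).length, (μ.parts.map List.sum).getD k 0 := by
    rw [List.length_map, μ.len_eq]
    exact Finset.sum_congr rfl fun k _ => compSize_getD μ k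
  rw [he, list_sum_getD, μ.size_eq]

lemma psum_le {ℓ n : ℕ} (μ : Multicomp ℓ n) (l i : ℕ) : μ.psum l i ≤ n := by
  unfold Multicomp.psum
  have h1 : ∑ j ∈ Finset.range i, μ.rowLen l j ≤ μ.compSize l := sum_getD_le _ i
  have h2 := sum_compSize_le μ (l+1)
  rw [Finset.sum_range_succ] at h2
  omega

lemma exists_step (f : ℕ → ℕ) (P : ℕ) : ∀ L, f 0 < P → P ≤ f L →
    ∃ l, l < L ∧ f l < P ∧ P ≤ f (l+1) := by
  intro L
  induction L with
  | zero => intro h0 hL; omega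
  | succ L ih =>
    intro h0 hL
    by_cases hfL : f L < P
    · exact ⟨L, Nat.lt_succ_self L, hfL, hL⟩
    · obtain ⟨l, hl, hx1, hx2⟩ := ih h0 (by omega)
      exact ⟨l, by omega, hx1, hx2⟩

lemma exists_interval {ℓ n : ℕ} (μ : Multicomp ℓ n) {P : ℕ} (hP1 : 1 ≤ P) (hPn : P ≤ n) :
    ∃ l i, μ.psum l i < P ∧ P ≤ μ.psum l (i+1) := by
  obtain ⟨l, hlL, h1, h2⟩ := exists_step (fun l => ∑ k ∈ Finset.range l, μ.compSize k) P ℓ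
    (by show (∑ k ∈ Finset.range 0, μ.compSize k) < P; simp; omega)
    (by show P ≤ ∑ k ∈ Finset.range ℓ, μ.compSize k; rw [sum_compSize_top]; exact hPn)
  have hub : P ≤ μ.psum l (μ.parts.getD l []).length := by
    unfold Multicomp.psum
    have hrs : ∑ j ∈ Finset.range (μ.parts.getD l []).length, μ.rowLen l j = μ.compSize l :=
      list_sum_getD _
    rw [hrs]
    rw [Finset.sum_range_succ] at h2
    omega
  obtain ⟨i, hiL, g1, g2⟩ := exists_step (fun i => μ.psum l i) P (μ.parts.getD l []).length
    (by show μ.psum l 0 < P; unfold Multicomp.psum; simpa using h1) hub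
  exact ⟨l, i, g1, g2⟩

lemma eq_Ioc_of_downward {V : Finset ℕ} {Q R : ℕ} (hsub : V ⊆ Finset.Ioc Q R)
    (hdc : ∀ b ∈ V, ∀ b', Q < b' → b' ≤ b → b' ∈ V) : V = Finset.Ioc Q (Q + V.card) := by
  ext b
  simp only [Finset.mem_Ioc]
  constructor
  · intro hb
    have hQb := (Finset.mem_Ioc.mp (hsub hb)).1
    have hsub2 : Finset.Ioc Q b ⊆ V := fun x hx => by
      have hx' := Finset.mem_Ioc.mp hx
      exact hdc b hb x hx'.1 hx'.2
    have hc := Finset.card_le_card hsub2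
    rw [Nat.card_Ioc] at hc
    exact ⟨hQb, by omega⟩
  · rintro ⟨hQb, hbc⟩
    by_contra hbV
    have hsub2 : V ⊆ Finset.Ioc Q (b-1) := by
      intro x hx
      have hx' := Finset.mem_Ioc.mp (hsub hx)
      rw [Finset.mem_Ioc]
      refine ⟨hx'.1, ?_⟩
      by_contra hxb
      push_neg at hxb
      exact hbV (hdc x hx b hQb (by omega))
    have hc := Finset.card_le_card hsub2
    rw [Nat.card_Ioc] at hc
    omega

lemma mem_S_iff {ℓ n : ℕ} {nu : Multicomp ℓ n} {tnu : ℕ → Node}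
    (htnu : IsRowReading nu tnu) (l i : ℕ) {b : ℕ} (hb1 : 1 ≤ b) (hbn : b ≤ n) :
    nodeLT (tnu b) l i ↔ b ≤ nu.psum l i := by
  have hIcc : Finset.Ioc 0 n = Finset.Icc 1 n := by
    ext x; simp only [Finset.mem_Ioc, Finset.mem_Icc]; omega
  have hcard : ((Finset.Ioc 0 n).filter (fun c => nodeLT (tnu c) l i)).card = nu.psum l i := by
    rw [hIcc, ← tabPsum_eq_card, tabPsum_full htnu.1]
  have hdc : ∀ x ∈ (Finset.Ioc 0 n).filter (fun c => nodeLT (tnu c) l i),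
      ∀ x', 0 < x' → x' ≤ x → x' ∈ (Finset.Ioc 0 n).filter (fun c => nodeLT (tnu c) l i) := by
    intro x hx x' h1 h2
    obtain ⟨hxI, hxP⟩ := Finset.mem_filter.mp hx
    have hxI' := Finset.mem_Ioc.mp hxI
    refine Finset.mem_filter.mpr ⟨Finset.mem_Ioc.mpr ⟨h1, by omega⟩, ?_⟩
    rcases eq_or_lt_of_le h2 with rfl | hlt
    · exact hxP
    · have hlex := (htnu.2 x' x h1 (by omega) (by omega) hxI'.2).mp hlt
      unfold nodeLex at hlex
      unfold nodeLT at hxP ⊢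
      omega
  have hBeq := eq_Ioc_of_downward (Finset.filter_subset _ _) hdc
  constructor
  · intro h
    have hbB : b ∈ (Finset.Ioc 0 n).filter (fun c => nodeLT (tnu c) l i) :=
      Finset.mem_filter.mpr ⟨Finset.mem_Ioc.mpr ⟨by omega, hbn⟩, h⟩
    rw [hBeq] at hbB
    have := Finset.mem_Ioc.mp hbB
    omega
  · intro h
    have hbB : b ∈ Finset.Ioc (0:ℕ)
        (0 + ((Finset.Ioc 0 n).filter (fun c => nodeLT (tnu c) l i)).card) :=
      Finset.mem_Ioc.mpr ⟨by omega, by omega⟩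
    rw [← hBeq] at hbB
    exact (Finset.mem_filter.mp hbB).2

lemma tabPsum_eq_cntP {ℓ n : ℕ} {nu : Multicomp ℓ n} {tnu v : ℕ → Node} {dv : Equiv.Perm ℕ}
    (htnu : IsRowReading nu tnu) (hd : IsDPerm n tnu v dv) {m : ℕ} (hm : m ≤ n) (l i : ℕ) :
    tabPsum v m l i = cntP dv m (nu.psum l i) := by
  rw [tabPsum_eq_card]
  unfold cntP
  congr 1
  apply Finset.filter_congr
  intro a ha
  have ha' := Finset.mem_Icc.mp ha
  have hva := hd.2 a ha'.1 (le_trans ha'.2 hm)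
  have hdva := fixesOutside_apply_mem hd.1 ha'.1 (le_trans ha'.2 hm)
  rw [hva]
  exact mem_S_iff htnu l i hdva.1 hdva.2

lemma dperm_symm_lt {ℓ n : ℕ} {nu : Multicomp ℓ n} {tnu v : ℕ → Node} {dv : Equiv.Perm ℕ}
    (htnu : IsRowReading nu tnu) (hv : RowStandard nu v) (hd : IsDPerm n tnu v dv)
    {l i b b' : ℕ} (hQb : nu.psum l i < b) (hbb' : b < b') (hb'Q : b' ≤ nu.psum l (i+1)) :
    dv⁻¹ b < dv⁻¹ b' := by
  have hQn := psum_le nu l (i+1)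
  have hbn : b ≤ n := by omega
  have hb'n : b' ≤ n := by omega
  have hb1 : 1 ≤ b := by omega
  have hb'1 : 1 ≤ b' := by omega
  have hrow : ∀ c, nu.psum l i < c → c ≤ nu.psum l (i+1) → 1 ≤ c → c ≤ n →
      (tnu c).1 = l ∧ (tnu c).2.1 = i := by
    intro c h1 h2 hc1 hcn
    have hS1 := mem_S_iff htnu l i hc1 hcn
    have hS2 := mem_S_iff htnu l (i+1) hc1 hcn
    unfold nodeLT at hS1 hS2
    omega
  obtain ⟨hc1, hr1⟩ := hrow b hQb (by omega) hb1 hbn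
  obtain ⟨hc2, hr2⟩ := hrow b' (by omega) hb'Q hb'1 hb'n
  have hlex := (htnu.2 b b' hb1 hbn hb'1 hb'n).mp hbb'
  have hcol : (tnu b).2.2 < (tnu b').2.2 := by
    unfold nodeLex at hlex
    omega
  have hafix := fixesOutside_apply_mem (fixesOutside_inv hd.1) hb1 hbn
  have ha'fix := fixesOutside_apply_mem (fixesOutside_inv hd.1) hb'1 hb'n
  have hva : v (dv⁻¹ b) = tnu b := by
    rw [hd.2 (dv⁻¹ b) hafix.1 hafix.2, show ∀ x, dv (dv⁻¹ x) = x from Equiv.apply_symm_apply dv]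
  have hva' : v (dv⁻¹ b') = tnu b' := by
    rw [hd.2 (dv⁻¹ b') ha'fix.1 ha'fix.2, show ∀ x, dv (dv⁻¹ x) = x from Equiv.apply_symm_apply dv]
  apply hv.2 (dv⁻¹ b) (dv⁻¹ b') hafix.1 hafix.2 ha'fix.1 ha'fix.2
  · rw [hva, hva', hc1, hc2]
  · rw [hva, hva', hr1, hr2]
  · rw [hva, hva']
    exact hcol

lemma cntP_interp {n : ℕ} {u : Equiv.Perm ℕ} (hu : FixesOutside u 1 n)
    {Q Q' m : ℕ} (hRI : ∀ b b', Q < b → b < b' → b' ≤ Q' → u⁻¹ b < u⁻¹ b')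
    (hQ'n : Q' ≤ n) (hm : m ≤ n) {P : ℕ} (hQP : Q ≤ P) (hPQ' : P ≤ Q') :
    cntP u m P = min (cntP u m Q + (P - Q)) (cntP u m Q') := by
  have hsplit : ∀ P', Q ≤ P' → P' ≤ Q' →
      cntP u m P' = cntP u m Q + ((Finset.Ioc Q P').filter fun b => u⁻¹ b ≤ m).card := by
    intro P' hx1 hx2
    unfold cntP
    have hdisj : Disjoint ((Finset.Icc 1 m).filter fun k => u k ≤ Q)
        ((Finset.Icc 1 m).filter fun k => Q < u k ∧ u k ≤ P') := by
      rw [Finset.disjoint_left]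
      intro x hx1' hx2'
      have g1 := (Finset.mem_filter.mp hx1').2
      have g2 := (Finset.mem_filter.mp hx2').2
      omega
    have hsp : ((Finset.Icc 1 m).filter fun k => u k ≤ P').card
        = ((Finset.Icc 1 m).filter fun k => u k ≤ Q).card
          + ((Finset.Icc 1 m).filter fun k => Q < u k ∧ u k ≤ P').card := by
      rw [← Finset.card_union_of_disjoint hdisj]
      congr 1
      ext x
      simp only [Finset.mem_filter, Finset.mem_union, Finset.mem_Icc]
      omega
    rw [hsp]
    congr 1
    apply Finset.card_nbij' (fun k => u k) (fun c => u⁻¹ c)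
    · intro x hx
      obtain ⟨hxI, hxp⟩ := Finset.mem_filter.mp hx
      have hxI' := Finset.mem_Icc.mp hxI
      refine Finset.mem_filter.mpr ⟨Finset.mem_Ioc.mpr ⟨hxp.1, hxp.2⟩, ?_⟩
      rw [show ∀ x, u⁻¹ (u x) = x from Equiv.symm_apply_apply u]
      exact hxI'.2
    · intro c hc
      obtain ⟨hcI, hcm⟩ := Finset.mem_filter.mp hc
      have hcI' := Finset.mem_Ioc.mp hcI
      have hc1 : 1 ≤ c := by omega
      have hcn : c ≤ n := by omega
      have hbnd := fixesOutside_apply_mem (fixesOutside_inv hu) hc1 hcn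
      refine Finset.mem_filter.mpr ⟨Finset.mem_Icc.mpr ⟨hbnd.1, hcm⟩, ?_⟩
      rw [show ∀ x, u (u⁻¹ x) = x from Equiv.apply_symm_apply u]
      exact ⟨hcI'.1, hcI'.2⟩
    · intro x _; exact Equiv.symm_apply_apply u x
    · intro c _; exact Equiv.apply_symm_apply u c
  have hVdc : ∀ x ∈ (Finset.Ioc Q Q').filter (fun b => u⁻¹ b ≤ m),
      ∀ x', Q < x' → x' ≤ x → x' ∈ (Finset.Ioc Q Q').filter (fun b => u⁻¹ b ≤ m) := by
    intro x hx x' h1 h2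
    obtain ⟨hxI, hxm⟩ := Finset.mem_filter.mp hx
    have hxI' := Finset.mem_Ioc.mp hxI
    refine Finset.mem_filter.mpr ⟨Finset.mem_Ioc.mpr ⟨h1, by omega⟩, ?_⟩
    rcases eq_or_lt_of_le h2 with rfl | hlt
    · exact hxm
    · exact le_of_lt (lt_of_lt_of_le (hRI x' x h1 hlt hxI'.2) hxm)
  have hVeq := eq_Ioc_of_downward (Finset.filter_subset _ _) hVdc
  have e2 := hsplit Q' (le_trans hQP hPQ') (le_refl Q')
  have e1 := hsplit P hQP hPQ'
  have hVP : (Finset.Ioc Q P).filter (fun b => u⁻¹ b ≤ m)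
      = Finset.Ioc Q (min (Q + ((Finset.Ioc Q Q').filter (fun b => u⁻¹ b ≤ m)).card) P) := by
    ext x
    constructor
    · intro hx
      obtain ⟨hxI, hxm⟩ := Finset.mem_filter.mp hx
      have hxI' := Finset.mem_Ioc.mp hxI
      have hxV : x ∈ (Finset.Ioc Q Q').filter (fun b => u⁻¹ b ≤ m) :=
        Finset.mem_filter.mpr ⟨Finset.mem_Ioc.mpr ⟨hxI'.1, le_trans hxI'.2 hPQ'⟩, hxm⟩
      rw [hVeq] at hxV
      have hxV' := Finset.mem_Ioc.mp hxV
      rw [Finset.mem_Ioc]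
      exact ⟨hxI'.1, le_min hxV'.2 hxI'.2⟩
    · intro hx
      have hx' := Finset.mem_Ioc.mp hx
      have hxV : x ∈ Finset.Ioc Q (Q + ((Finset.Ioc Q Q').filter (fun b => u⁻¹ b ≤ m)).card) :=
        Finset.mem_Ioc.mpr ⟨hx'.1, le_trans hx'.2 (min_le_left _ _)⟩
      rw [← hVeq] at hxV
      obtain ⟨hxI, hxm⟩ := Finset.mem_filter.mp hxV
      refine Finset.mem_filter.mpr ⟨Finset.mem_Ioc.mpr
        ⟨hx'.1, le_trans hx'.2 (min_le_right _ _)⟩, hxm⟩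
  rw [hVP, Nat.card_Ioc] at e1
  simp only [Nat.min_def] at e1 ⊢
  split_ifs at e1 ⊢ <;> omega

lemma cntP_P_zero {n : ℕ} {u : Equiv.Perm ℕ} (hu : FixesOutside u 1 n) (m : ℕ) :
    cntP u m 0 = 0 := by
  unfold cntP
  rw [Finset.card_eq_zero, Finset.filter_eq_empty_iff]
  intro x hx
  have hx' := Finset.mem_Icc.mp hx
  intro hle
  have h0 : u 0 = 0 := hu 0 (by omega)
  have heq : u x = u 0 := by omega
  have := u.injective heq
  omega

lemma cntP_big {n : ℕ} {u : Equiv.Perm ℕ} (hu : FixesOutside u 1 n) {m P : ℕ}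
    (hm : m ≤ n) (hP : n ≤ P) : cntP u m P = m := by
  unfold cntP
  rw [Finset.filter_true_of_mem, Nat.card_Icc]
  · omega
  · intro x hx
    have hx' := Finset.mem_Icc.mp hx
    have := fixesOutside_apply_mem hu hx'.1 (le_trans hx'.2 hm)
    omega

lemma dle_of_le_n {n : ℕ} {u w : Equiv.Perm ℕ} (hu : FixesOutside u 1 n)
    (hw : FixesOutside w 1 n) (h : ∀ m, m ≤ n → ∀ P, cntP w m P ≤ cntP u m P) :
    DLE u w := by
  intro m
  induction m with
  | zero => intro P; simp [cntP_zero]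
  | succ m ih =>
    intro P
    by_cases hm : m + 1 ≤ n
    · exact h (m+1) hm P
    · rw [cntP_succ, cntP_succ, hu (m+1) (by omega), hw (m+1) (by omega)]
      exact Nat.add_le_add_right (ih P) _

end Statement4Tab


/-- For row standard `ν`-tableaux `v` and `v̂`: `v ⊵ v̂` if and only if
`d(v) ≤ d(v̂)` in the Bruhat order on `S_n`. -/
theorem statement4 {ℓ n : ℕ} (nu : Multicomp ℓ n) (tnu v vh : ℕ → Node)
    (htnu : IsRowReading nu tnu) (hv : RowStandard nu v) (hvh : RowStandard nu vh)
    (dv dvh : Equiv.Perm ℕ) (h1 : IsDPerm n tnu v dv) (h2 : IsDPerm n tnu vh dvh) :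
    TabDominates n v vh ↔ BruhatLE n dv dvh := by
  constructor
  · intro hTD
    have hDLE : DLE dv dvh := by
      apply dle_of_le_n h1.1 h2.1
      intro m hm P
      rcases Nat.eq_zero_or_pos m with rfl | hm1
      · simp [cntP_zero]
      by_cases hP0 : P = 0
      · subst hP0
        rw [cntP_P_zero h2.1, cntP_P_zero h1.1]
      by_cases hPn : P ≤ n
      · obtain ⟨l, i, hQ, hQ'⟩ := exists_interval nu (by omega) hPn
        have hQ'n := psum_le nu l (i+1)
        have eV := cntP_interp h1.1
          (fun b b' x y z => dperm_symm_lt htnu hv h1 x y z)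
          hQ'n hm (le_of_lt hQ) hQ'
        have eVh := cntP_interp h2.1
          (fun b b' x y z => dperm_symm_lt htnu hvh h2 x y z)
          hQ'n hm (le_of_lt hQ) hQ'
        have c1 : cntP dvh m (nu.psum l i) ≤ cntP dv m (nu.psum l i) := by
          rw [← tabPsum_eq_cntP htnu h1 hm, ← tabPsum_eq_cntP htnu h2 hm]
          exact hTD m l i hm1 hm
        have c2 : cntP dvh m (nu.psum l (i+1)) ≤ cntP dv m (nu.psum l (i+1)) := by
          rw [← tabPsum_eq_cntP htnu h1 hm, ← tabPsum_eq_cntP htnu h2 hm]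
          exact hTD m l (i+1) hm1 hm
        rw [eV, eVh]
        simp only [Nat.min_def]
        split_ifs <;> omega
      · push_neg at hPn
        rw [cntP_big h2.1 hm (by omega), cntP_big h1.1 hm (by omega)]
    exact bruhatLE_of_dle (permLength n dvh) dv dvh (le_refl _) h1.1 h2.1 hDLE
  · rintro ⟨ww, uw, hrw, hpw, hsub, hru, hpu⟩
    have hDLE : DLE dv dvh := by
      have hD := dle_of_sublist ww hrw uw hru hsub
      rwa [hpw, hpu] at hD
    intro m l i hm1 hmn
    rw [tabPsum_eq_cntP htnu h1 hmn, tabPsum_eq_cntP htnu h2 hmn]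
    exact hDLE m (nu.psum l i)

end SpechtInduction
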